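/- For any basic fuzzy theory Λ (every sequent of Λ has the form Γ ⊢ φ where all formulae in Γ contain only variables), the comparison functor K : Mod(Λ) → EM(T_Λ) into the Eilenberg–Moore category of the associated monad T_Λ = U_Λ ∘ F_Λ on Fuz(H) is an isomorphism of categories, with inverse H sending an Eilenberg–Moore algebra ξ : T_Λ(M, μ_M) → (M, μ_M) to the Σ-fuzzy algebra on (M, μ_M) with c^{H(ξ)} = ξ(c^{F_Λ(M,μ_M)}) and f^{H(ξ)} = ξ ∘ f^{F_Λ(M,μ_M)} ∘ η^{ar(f)}; in particular Mod(Λ) and EM(T_Λ) are equivalent categories. -/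

import Mathlib

universe u

/-- A signature: operation symbols with positive arities, and constant symbols. -/
structure Signature : Type (u + 1) where
  Op : Type u
  ar : Op → ℕ+
  Const : Type u

/-- Terms of the language `(S, X)`: inductively built from variables, constants and
operation applications. -/
inductive Term (S : Signature.{u}) (X : Type u) : Type u
  | var : X → Term S X
  | const : S.Const → Term S X
  | op (f : S.Op) : (Fin (S.ar f : ℕ) → Term S X) → Term S X

/-- Formulae: equations `s ≡ t` and membership propositions `∃_l t`. -/
inductive Formula (H : Type u) (S : Signature.{u}) (X : Type u) : Type u
  | eq : Term S X → Term S X → Formula H S X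
  | mem : H → Term S X → Formula H S X

/-- A sequent `Γ ⊢ φ`. -/
abbrev Sequent (H : Type u) (S : Signature.{u}) (X : Type u) : Type u :=
  Set (Formula H S X) × Formula H S X

/-- A fuzzy theory: a set of sequents. -/
abbrev Theory (H : Type u) (S : Signature.{u}) (X : Type u) : Type u :=
  Set (Sequent H S X)

/-- Substitution of terms for variables in a term. -/
def Term.subst {S : Signature.{u}} {X : Type u} (σ : X → Term S X) :
    Term S X → Term S X
  | .var x => σ x
  | .const c => .const c
  | .op f ts => .op f fun i => (ts i).subst σ

/-- Substitution of terms for variables in a formula. -/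
def Formula.subst {H : Type u} {S : Signature.{u}} {X : Type u} (σ : X → Term S X) :
    Formula H S X → Formula H S X
  | .eq s t => .eq (s.subst σ) (t.subst σ)
  | .mem l t => .mem l (t.subst σ)

/-- The fuzzy sequent calculus: `Deriv Λ Γ φ` means that the sequent `Γ ⊢ φ` belongs
to the deductive closure `Λ^⊢` of the theory `Λ`. -/
inductive Deriv {H : Type u} [Order.Frame H] {S : Signature.{u}} {X : Type u}
    (Λ : Theory H S X) : Set (Formula H S X) → Formula H S X → Prop
  | ax {Γ φ} : (Γ, φ) ∈ Λ → Deriv Λ Γ φ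
  | assum {Γ φ} : φ ∈ Γ → Deriv Λ Γ φ
  | weak {Γ Δ φ} : Deriv Λ Γ φ → Deriv Λ (Γ ∪ Δ) φ
  | cut {Γ Φ ψ} : (∀ φ ∈ Φ, Deriv Λ Γ φ) → Deriv Λ Φ ψ → Deriv Λ Γ ψ
  | refl {Γ t} : Deriv Λ Γ (.eq t t)
  | symm {Γ s t} : Deriv Λ Γ (.eq s t) → Deriv Λ Γ (.eq t s)
  | trans {Γ s t u} : Deriv Λ Γ (.eq s t) → Deriv Λ Γ (.eq t u) → Deriv Λ Γ (.eq s u)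
  | sub {Γ φ} (σ : X → Term S X) :
      Deriv Λ Γ φ → Deriv Λ (Formula.subst σ '' Γ) (φ.subst σ)
  | cong {Γ} (f : S.Op) (ts ss : Fin (S.ar f : ℕ) → Term S X) :
      (∀ i, Deriv Λ Γ (.eq (ts i) (ss i))) → Deriv Λ Γ (.eq (.op f ts) (.op f ss))
  | inf {Γ t} : Deriv Λ Γ (.mem ⊥ t)
  | mon {Γ l t} (l' : H) : Deriv Λ Γ (.mem l t) → Deriv Λ Γ (.mem (l ⊓ l') t)
  | exp {Γ} (f : S.Op) (ts : Fin (S.ar f : ℕ) → Term S X) (ls : Fin (S.ar f : ℕ) → H) :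
      (∀ i, Deriv Λ Γ (.mem (ls i) (ts i))) →
      Deriv Λ Γ (.mem (⨅ i, ls i) (.op f ts))
  | sup {Γ t} (L : Set H) :
      (∀ l ∈ L, Deriv Λ Γ (.mem l t)) → Deriv Λ Γ (.mem (sSup L) t)
  | fn {Γ l t s} : Deriv Λ Γ (.eq t s) → Deriv Λ Γ (.mem l t) → Deriv Λ Γ (.mem l s)

/-- The deductive closure `Λ^⊢` of a theory `Λ`. -/
def deductiveClosure {H : Type u} [Order.Frame H] {S : Signature.{u}} {X : Type u}
    (Λ : Theory H S X) : Theory H S X :=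
  { p | Deriv Λ p.1 p.2 }
/-- A Σ-fuzzy algebra: a fuzzy set with operations (compatible with membership
degrees) and constants. -/
structure FuzzyAlgebra (H : Type u) [Order.Frame H] (S : Signature.{u}) :
    Type (u + 1) where
  carrier : Type u
  μ : carrier → H
  ops (f : S.Op) : (Fin (S.ar f : ℕ) → carrier) → carrier
  le_ops : ∀ (f : S.Op) (as : Fin (S.ar f : ℕ) → carrier),
    (⨅ i, μ (as i)) ≤ μ (ops f as)
  consts : S.Const → carrier

/-- Evaluation of a term in a Σ-fuzzy algebra under an assignment of the variables. -/
def FuzzyAlgebra.eval {H : Type u} [Order.Frame H] {S : Signature.{u}} {X : Type u}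
    (A : FuzzyAlgebra H S) (ι : X → A.carrier) : Term S X → A.carrier
  | .var x => ι x
  | .const c => A.consts c
  | .op f ts => A.ops f fun i => A.eval ι (ts i)

/-- Satisfaction of a formula in a Σ-fuzzy algebra under an assignment. -/
def FuzzyAlgebra.Sat {H : Type u} [Order.Frame H] {S : Signature.{u}} {X : Type u}
    (A : FuzzyAlgebra H S) (ι : X → A.carrier) : Formula H S X → Prop
  | .eq s t => A.eval ι s = A.eval ι t
  | .mem l t => l ≤ A.μ (A.eval ι t)

/-- Satisfaction of a sequent `Γ ⊢ φ` (with respect to all assignments). -/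
def FuzzyAlgebra.SatSeq {H : Type u} [Order.Frame H] {S : Signature.{u}} {X : Type u}
    (A : FuzzyAlgebra H S) (Γ : Set (Formula H S X)) (φ : Formula H S X) : Prop :=
  ∀ ι : X → A.carrier, (∀ ψ ∈ Γ, A.Sat ι ψ) → A.Sat ι φ

/-- A model of a fuzzy theory: an algebra satisfying all its sequents. -/
def FuzzyAlgebra.IsModel {H : Type u} [Order.Frame H] {S : Signature.{u}} {X : Type u}
    (A : FuzzyAlgebra H S) (Λ : Theory H S X) : Prop :=
  ∀ p ∈ Λ, A.SatSeq p.1 p.2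

/-- A morphism of Σ-fuzzy algebras: a fuzzy-set morphism commuting with all
operations and constants. -/
structure FuzzyAlgHom {H : Type u} [Order.Frame H] {S : Signature.{u}}
    (A B : FuzzyAlgebra H S) : Type u where
  toFun : A.carrier → B.carrier
  le_mem : ∀ x, A.μ x ≤ B.μ (toFun x)
  map_ops : ∀ (f : S.Op) (as : Fin (S.ar f : ℕ) → A.carrier),
    toFun (A.ops f as) = B.ops f fun i => toFun (as i)
  map_consts : ∀ c, toFun (A.consts c) = B.consts c
/-- An `H`-fuzzy set: a set together with a membership function into the frame `H`. -/
structure FuzzySet (H : Type u) [Order.Frame H] : Type (u + 1) where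
  carrier : Type u
  μ : carrier → H

/-- A morphism of fuzzy sets: a function that does not decrease membership degrees. -/
structure FuzzyHom {H : Type u} [Order.Frame H] (A B : FuzzySet H) : Type u where
  toFun : A.carrier → B.carrier
  le_mem : ∀ x, A.μ x ≤ B.μ (toFun x)

/-- The underlying fuzzy set of a Σ-fuzzy algebra. -/
def FuzzyAlgebra.toFuzzySet {H : Type u} [Order.Frame H] {S : Signature.{u}}
    (A : FuzzyAlgebra H S) : FuzzySet H :=
  ⟨A.carrier, A.μ⟩
/-- Identity morphism of Σ-fuzzy algebras. -/
def FuzzyAlgHom.id {H : Type u} [Order.Frame H] {S : Signature.{u}}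
    (A : FuzzyAlgebra H S) : FuzzyAlgHom A A :=
  ⟨_root_.id, fun _ => le_rfl, fun _ _ => rfl, fun _ => rfl⟩

/-- Composition of morphisms of Σ-fuzzy algebras. -/
def FuzzyAlgHom.comp {H : Type u} [Order.Frame H] {S : Signature.{u}}
    {A B C : FuzzyAlgebra H S} (f : FuzzyAlgHom A B) (g : FuzzyAlgHom B C) :
    FuzzyAlgHom A C where
  toFun := g.toFun ∘ f.toFun
  le_mem x := (f.le_mem x).trans (g.le_mem _)
  map_ops h as := by simp [Function.comp, f.map_ops, g.map_ops]
  map_consts c := by simp [Function.comp, f.map_consts, g.map_consts]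

/-- The category `Alg(Σ)` of Σ-fuzzy algebras. -/
instance algCat {H : Type u} [Order.Frame H] {S : Signature.{u}} :
    CategoryTheory.Category.{u} (FuzzyAlgebra H S) where
  Hom A B := FuzzyAlgHom A B
  id A := FuzzyAlgHom.id A
  comp f g := f.comp g
  id_comp _ := rfl
  comp_id _ := rfl
  assoc _ _ _ := rfl

/-- The forgetful functor `V_Σ : Alg(Σ) → Set`. -/
def forgetAlg (H : Type u) [Order.Frame H] (S : Signature.{u}) :
    CategoryTheory.Functor (FuzzyAlgebra H S) (Type u) where
  obj A := A.carrier
  map f := TypeCat.ofHom (FuzzyAlgHom.toFun f)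
  map_id _ := rfl
  map_comp _ _ := rfl

/-- The term algebra on a set `X`: terms with membership constantly `⊥` and
syntactic operations and constants. -/
def termAlgebra (H : Type u) [Order.Frame H] (S : Signature.{u}) (X : Type u) :
    FuzzyAlgebra H S where
  carrier := Term S X
  μ := fun _ => ⊥
  ops f ts := Term.op f ts
  le_ops f as := iInf_le (fun _ => (⊥ : H)) ⟨0, (S.ar f).pos⟩
  consts := Term.const

open CategoryTheory

/-- The category `Fuz(H)` of `H`-fuzzy sets. -/
instance fuzCat {H : Type u} [Order.Frame H] : Category.{u} (FuzzySet H) where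
  Hom A B := FuzzyHom A B
  id _ := ⟨_root_.id, fun _ => le_rfl⟩
  comp f g := ⟨g.toFun ∘ f.toFun, fun x => (f.le_mem x).trans (g.le_mem _)⟩
  id_comp _ := rfl
  comp_id _ := rfl
  assoc _ _ _ := rfl

/-- The category `Mod(Λ)` of models of a fuzzy theory `Λ`, as a full subcategory of
`Alg(Σ)`. -/
abbrev ModCat {H : Type u} [Order.Frame H] {S : Signature.{u}} {X : Type u}
    (Λ : Theory H S X) : Type (u + 1) :=
  CategoryTheory.ObjectProperty.FullSubcategory (fun A : FuzzyAlgebra H S => A.IsModel Λ)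

/-- The forgetful functor `U_Λ : Mod(Λ) → Fuz(H)`. -/
def forgetMod {H : Type u} [Order.Frame H] {S : Signature.{u}} {X : Type u}
    (Λ : Theory H S X) : ModCat Λ ⥤ FuzzySet H where
  obj A := A.obj.toFuzzySet
  map f := ⟨FuzzyAlgHom.toFun f.hom, FuzzyAlgHom.le_mem f.hom⟩
  map_id _ := rfl
  map_comp _ _ := rfl

/-- A formula containing only variables. -/
inductive Formula.VarsOnly {H : Type u} {S : Signature.{u}} {X : Type u} :
    Formula H S X → Prop
  | eq (x y : X) : VarsOnly (.eq (.var x) (.var y))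
  | mem (l : H) (x : X) : VarsOnly (.mem l (.var x))

/-- A basic theory: every premise of every sequent contains only variables. -/
def Theory.IsBasic {H : Type u} [Order.Frame H] {S : Signature.{u}} {X : Type u}
    (Λ : Theory H S X) : Prop :=
  ∀ p ∈ Λ, ∀ φ ∈ p.1, Formula.VarsOnly φ

section Aux

variable {H : Type u} [Order.Frame H] {S : Signature.{u}} {X : Type u}
  (Λ : Theory H S X) (F : FuzzySet H ⥤ ModCat Λ) (adj : F ⊣ forgetMod Λ)

theorem FuzzyHom.ext' {A B : FuzzySet H} {f g : FuzzyHom A B}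
    (h : f.toFun = g.toFun) : f = g := by
  cases f; cases g; cases h; rfl

theorem FuzzyAlgHom.ext' {A B : FuzzyAlgebra H S} {f g : FuzzyAlgHom A B}
    (h : f.toFun = g.toFun) : f = g := by
  cases f; cases g; cases h; rfl

theorem FuzzyAlgebra.mk_eq {c : Type u} {m : c → H}
    {o o' : ∀ f : S.Op, (Fin (S.ar f : ℕ) → c) → c} {l l'} {cs cs' : S.Const → c}
    (ho : o = o') (hc : cs = cs') :
    FuzzyAlgebra.mk c m o l cs = FuzzyAlgebra.mk c m o' l' cs' := by
  subst ho; subst hc; rfl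

theorem fullSub_ext {P : FuzzyAlgebra H S → Prop} {A B : CategoryTheory.ObjectProperty.FullSubcategory P}
    (h : A.obj = B.obj) : A = B := by
  cases A; cases B; cases h; rfl

theorem emAlg_mk_eq {T : Monad (FuzzySet H)} {A : FuzzySet H}
    {a a' : (T : FuzzySet H ⥤ FuzzySet H).obj A ⟶ A} {u u' s s'} (h : a = a') :
    Monad.Algebra.mk A a u s = Monad.Algebra.mk A a' u' s' := by
  subst h; rfl

/-- The inverse image algebra of an Eilenberg–Moore algebra. -/
def invAlg (M : adj.toMonad.Algebra) : FuzzyAlgebra H S where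
  carrier := M.A.carrier
  μ := M.A.μ
  ops f as := M.a.toFun ((F.obj M.A).obj.ops f fun i => (adj.unit.app M.A).toFun (as i))
  le_ops f as := by
    refine le_trans (le_trans ?_ ((F.obj M.A).obj.le_ops f _)) (M.a.le_mem _)
    exact iInf_mono fun i => (adj.unit.app M.A).le_mem (as i)
  consts c := M.a.toFun ((F.obj M.A).obj.consts c)

theorem xi_op (M : adj.toMonad.Algebra) (f : S.Op)
    (bs : Fin (S.ar f : ℕ) → (F.obj M.A).obj.carrier) :
    M.a.toFun ((F.obj M.A).obj.ops f fun i =>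
      (adj.unit.app M.A).toFun (M.a.toFun (bs i))) =
    M.a.toFun ((F.obj M.A).obj.ops f bs) := by
  set TA : FuzzySet H := (forgetMod Λ).obj (F.obj M.A) with hTA
  set e : (F.obj TA).obj.carrier :=
    (F.obj TA).obj.ops f fun i => (adj.unit.app TA).toFun (bs i) with he
  have htri : ∀ b : (F.obj M.A).obj.carrier,
      (adj.counit.app (F.obj M.A)).hom.toFun ((adj.unit.app TA).toFun b) = b := fun b =>
    congrFun (congrArg FuzzyHom.toFun (adj.right_triangle_components (F.obj M.A))) b
  have hnat : ∀ b : (F.obj M.A).obj.carrier,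
      (adj.unit.app M.A).toFun (M.a.toFun b) =
        (F.map M.a).hom.toFun ((adj.unit.app TA).toFun b) := fun b =>
    congrFun (congrArg FuzzyHom.toFun (adj.unit.naturality M.a)) b
  have hassoc : M.a.toFun ((adj.counit.app (F.obj M.A)).hom.toFun e) =
      M.a.toFun ((F.map M.a).hom.toFun e) :=
    congrFun (congrArg FuzzyHom.toFun M.assoc) e
  calc
    M.a.toFun ((F.obj M.A).obj.ops f fun i =>
        (adj.unit.app M.A).toFun (M.a.toFun (bs i)))
      = M.a.toFun ((F.obj M.A).obj.ops f fun i =>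
          (F.map M.a).hom.toFun ((adj.unit.app TA).toFun (bs i))) := by
        exact congrArg _ (congrArg _ (funext fun i => hnat (bs i)))
    _ = M.a.toFun ((F.map M.a).hom.toFun e) := by
        exact congrArg M.a.toFun ((F.map M.a).hom.map_ops f _).symm
    _ = M.a.toFun ((adj.counit.app (F.obj M.A)).hom.toFun e) := hassoc.symm
    _ = M.a.toFun ((F.obj M.A).obj.ops f fun i =>
          (adj.counit.app (F.obj M.A)).hom.toFun ((adj.unit.app TA).toFun (bs i))) := by
        exact congrArg M.a.toFun ((adj.counit.app (F.obj M.A)).hom.map_ops f _)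
    _ = M.a.toFun ((F.obj M.A).obj.ops f bs) := by
        exact congrArg _ (congrArg _ (funext fun i => htri (bs i)))

theorem invAlg_eval (M : adj.toMonad.Algebra) (ι : X → M.A.carrier) (t : Term S X) :
    (invAlg Λ F adj M).eval ι t =
    M.a.toFun ((F.obj M.A).obj.eval (fun x => (adj.unit.app M.A).toFun (ι x)) t) := by
  induction t with
  | var x => exact (congrFun (congrArg FuzzyHom.toFun M.unit) (ι x)).symm
  | const c => rfl
  | op f ts ih =>
    show M.a.toFun ((F.obj M.A).obj.ops f fun i =>
        (adj.unit.app M.A).toFun ((invAlg Λ F adj M).eval ι (ts i))) = _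
    have h1 : (fun i => (adj.unit.app M.A).toFun ((invAlg Λ F adj M).eval ι (ts i)))
        = fun i => (adj.unit.app M.A).toFun (M.a.toFun
            ((F.obj M.A).obj.eval (fun x => (adj.unit.app M.A).toFun (ι x)) (ts i))) :=
      funext fun i => congrArg _ (ih i)
    rw [h1]
    exact xi_op Λ F adj M f _

theorem invAlg_isModel (hbasic : Λ.IsBasic) (M : adj.toMonad.Algebra) :
    (invAlg Λ F adj M).IsModel Λ := by
  intro p hp ι hι
  obtain ⟨Γ, φ⟩ := p
  have hFM : (F.obj M.A).obj.Sat (fun x => (adj.unit.app M.A).toFun (ι x)) φ := by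
    refine (F.obj M.A).property _ hp _ (fun ψ hψ => ?_)
    have hvo := hbasic _ hp ψ hψ
    have hsat := hι ψ hψ
    cases hvo with
    | eq x y => exact congrArg (adj.unit.app M.A).toFun hsat
    | mem l x => exact le_trans hsat ((adj.unit.app M.A).le_mem (ι x))
  cases φ with
  | eq s t =>
    show (invAlg Λ F adj M).eval ι s = (invAlg Λ F adj M).eval ι t
    rw [invAlg_eval Λ F adj M ι s, invAlg_eval Λ F adj M ι t]
    exact congrArg M.a.toFun hFM
  | mem l t =>
    show l ≤ (invAlg Λ F adj M).μ ((invAlg Λ F adj M).eval ι t)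
    rw [invAlg_eval Λ F adj M ι t]
    exact le_trans hFM (M.a.le_mem _)

/-- The model associated to an EM algebra. -/
def invModel (hbasic : Λ.IsBasic) (M : adj.toMonad.Algebra) : ModCat Λ :=
  ⟨invAlg Λ F adj M, invAlg_isModel Λ F adj hbasic M⟩

/-- The structure map as an algebra homomorphism. -/
def xiAlgHom (M : adj.toMonad.Algebra) :
    FuzzyAlgHom (F.obj M.A).obj (invAlg Λ F adj M) where
  toFun := M.a.toFun
  le_mem := M.a.le_mem
  map_ops f bs := (xi_op Λ F adj M f bs).symm
  map_consts _ := rfl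

/-- The inverse functor `H : EM(T_Λ) → Mod(Λ)`. -/
def Hinv (hbasic : Λ.IsBasic) : adj.toMonad.Algebra ⥤ ModCat Λ where
  obj M := invModel Λ F adj hbasic M
  map {M N} h := { hom :=
    { toFun := h.f.toFun
      le_mem := h.f.le_mem
      map_ops := fun f as => by
        have hh : ∀ b, h.f.toFun (M.a.toFun b) = N.a.toFun ((F.map h.f).hom.toFun b) :=
          fun b => (congrFun (congrArg FuzzyHom.toFun h.h) b).symm
        have hnat : ∀ x, (adj.unit.app N.A).toFun (h.f.toFun x)
            = (F.map h.f).hom.toFun ((adj.unit.app M.A).toFun x) := fun x =>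
          congrFun (congrArg FuzzyHom.toFun (adj.unit.naturality h.f)) x
        show h.f.toFun (M.a.toFun ((F.obj M.A).obj.ops f fun i =>
            (adj.unit.app M.A).toFun (as i)))
          = N.a.toFun ((F.obj N.A).obj.ops f fun i =>
            (adj.unit.app N.A).toFun (h.f.toFun (as i)))
        refine (hh _).trans ?_
        refine congrArg N.a.toFun ?_
        refine ((F.map h.f).hom.map_ops f _).trans ?_
        exact congrArg _ (funext fun i => (hnat (as i)).symm)
      map_consts := fun c => by
        have hh : ∀ b, h.f.toFun (M.a.toFun b) = N.a.toFun ((F.map h.f).hom.toFun b) :=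
          fun b => (congrFun (congrArg FuzzyHom.toFun h.h) b).symm
        show h.f.toFun (M.a.toFun ((F.obj M.A).obj.consts c))
          = N.a.toFun ((F.obj N.A).obj.consts c)
        exact (hh _).trans (congrArg N.a.toFun ((F.map h.f).hom.map_consts c)) } }
  map_id _ := ObjectProperty.hom_ext _ (FuzzyAlgHom.ext' rfl)
  map_comp _ _ := ObjectProperty.hom_ext _ (FuzzyAlgHom.ext' rfl)

theorem hinv_comparison_obj (hbasic : Λ.IsBasic) (D : ModCat Λ) :
    (Hinv Λ F adj hbasic).obj ((Monad.comparison adj).obj D) = D := by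
  refine fullSub_ext ?_
  have htri : ∀ b : D.obj.carrier,
      (adj.counit.app D).hom.toFun ((adj.unit.app ((forgetMod Λ).obj D)).toFun b) = b :=
    fun b => congrFun (congrArg FuzzyHom.toFun (adj.right_triangle_components D)) b
  refine FuzzyAlgebra.mk_eq (H := H) (S := S) ?_ ?_
  · funext f as
    exact ((adj.counit.app D).hom.map_ops f _).trans
      (congrArg _ (funext fun i => htri (as i)))
  · funext c
    exact (adj.counit.app D).hom.map_consts c

theorem comparison_hinv_obj (hbasic : Λ.IsBasic) (M : adj.toMonad.Algebra) :
    (Monad.comparison adj).obj ((Hinv Λ F adj hbasic).obj M) = M := by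
  have h1 : adj.unit.app M.A ≫ (forgetMod Λ).map (adj.counit.app (invModel Λ F adj hbasic M))
      = 𝟙 M.A := adj.right_triangle_components (invModel Λ F adj hbasic M)
  have h2 : adj.unit.app M.A ≫ (forgetMod Λ).map
      (show F.obj M.A ⟶ invModel Λ F adj hbasic M from ⟨xiAlgHom Λ F adj M⟩)
      = 𝟙 M.A := M.unit
  have key : adj.counit.app (invModel Λ F adj hbasic M)
      = (show F.obj M.A ⟶ invModel Λ F adj hbasic M from ⟨xiAlgHom Λ F adj M⟩) := by
    refine (adj.homEquiv M.A (invModel Λ F adj hbasic M)).injective ?_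
    exact h1.trans h2.symm
  refine emAlg_mk_eq (T := adj.toMonad) ?_
  exact congrArg (forgetMod Λ).map key

theorem mod_eqToHom_toFun {A B : ModCat Λ} (e : A = B) (x : A.obj.carrier) :
    (show FuzzyAlgHom A.obj B.obj from (eqToHom e).hom).toFun x
      = cast (congrArg (fun Z : ModCat Λ => Z.obj.carrier) e) x := by
  subst e; rfl

theorem em_eqToHom_f_toFun {P Q : adj.toMonad.Algebra} (e : P = Q) (x : P.A.carrier) :
    (eqToHom e).f.toFun x
      = cast (congrArg (fun Z : adj.toMonad.Algebra => Z.A.carrier) e) x := by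
  subst e; rfl

end Aux

theorem mod_comp3_toFun {H : Type u} [Order.Frame H] {S : Signature.{u}} {X : Type u}
    {Λ : Theory H S X} {A B C D : ModCat Λ} (g1 : A ⟶ B) (g2 : B ⟶ C) (g3 : C ⟶ D)
    (x : A.obj.carrier) :
    (g1 ≫ g2 ≫ g3).hom.toFun x = g3.hom.toFun (g2.hom.toFun (g1.hom.toFun x)) := rfl

theorem em_comp3_f_toFun {H : Type u} [Order.Frame H] {S : Signature.{u}} {X : Type u}
    {Λ : Theory H S X} {F : FuzzySet H ⥤ ModCat Λ} {adj : F ⊣ forgetMod Λ}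
    {P Q R T : adj.toMonad.Algebra} (g1 : P ⟶ Q) (g2 : Q ⟶ R) (g3 : R ⟶ T)
    (x : P.A.carrier) :
    (g1 ≫ g2 ≫ g3).f.toFun x = g3.f.toFun (g2.f.toFun (g1.f.toFun x)) := rfl


/-- For a basic theory `Λ`, the comparison functor `K : Mod(Λ) → EM(T_Λ)` into the
Eilenberg–Moore category of the monad `T_Λ = U_Λ ∘ F_Λ` induced by the free-model
adjunction `F_Λ ⊣ U_Λ` is an isomorphism of categories (it admits a strictly inverse
functor); in particular `Mod(Λ)` and `EM(T_Λ)` are equivalent categories. -/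
theorem basic_theory_models_are_EilenbergMoore_algebras {H : Type u} [Order.Frame H]
    {S : Signature.{u}} {X : Type u} (Λ : Theory H S X) (hbasic : Λ.IsBasic)
    (F : FuzzySet H ⥤ ModCat Λ) (adj : F ⊣ forgetMod Λ) :
    (∃ Hinv : adj.toMonad.Algebra ⥤ ModCat Λ,
        Monad.comparison adj ⋙ Hinv = 𝟭 (ModCat Λ) ∧
        Hinv ⋙ Monad.comparison adj = 𝟭 adj.toMonad.Algebra) ∧
    (Monad.comparison adj).IsEquivalence := by
  have h1 : Monad.comparison adj ⋙ Hinv Λ F adj hbasic = 𝟭 (ModCat Λ) := by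
    refine CategoryTheory.Functor.ext (hinv_comparison_obj Λ F adj hbasic) ?_
    intro A B f
    refine ObjectProperty.hom_ext _ (FuzzyAlgHom.ext' (funext fun x => ?_))
    rw [mod_comp3_toFun, mod_eqToHom_toFun, mod_eqToHom_toFun]
    rfl
  have h2 : Hinv Λ F adj hbasic ⋙ Monad.comparison adj = 𝟭 adj.toMonad.Algebra := by
    refine CategoryTheory.Functor.ext (comparison_hinv_obj Λ F adj hbasic) ?_
    intro P Q h
    refine Monad.Algebra.Hom.ext ?_
    refine FuzzyHom.ext' (funext fun x => ?_)
    rw [em_comp3_f_toFun, em_eqToHom_f_toFun, em_eqToHom_f_toFun]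
    rfl
  refine ⟨⟨Hinv Λ F adj hbasic, h1, h2⟩, ?_⟩
  exact (CategoryTheory.Equivalence.mk (Monad.comparison adj) (Hinv Λ F adj hbasic)
    (eqToIso h1.symm) (eqToIso h2)).isEquivalence_functor
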